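/- Let X be a connected topological space admitting a continuous locally extremal function f : X → ℝ that is not constant. Then X contains, for every cardinal κ < 𝔠, a weakly separated subset of cardinality greater than κ; equivalently, the weak separate number satisfies R(X) ≥ 𝔠. -/

import Mathlib

open Cardinal

/-- A subset `A` of a topological space `X` is weakly separated if each point `a ∈ A`
can be assigned an open neighborhood `O a ⊆ X` such that for any two distinct points
`a, b ∈ A`, either `a ∉ O b` or `b ∉ O a`. -/
def WeaklySeparated {X : Type*} [TopologicalSpace X] (A : Set X) : Prop :=
  ∃ O : X → Set X, (∀ a ∈ A, IsOpen (O a) ∧ a ∈ O a) ∧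
    ∀ a ∈ A, ∀ b ∈ A, a ≠ b → a ∉ O b ∨ b ∉ O a

lemma aux_ws {X : Type u} [TopologicalSpace X] (g : X → ℝ) (O : X → Set X)
    (hOopen : ∀ x, IsOpen (O x)) (hOmem : ∀ x, x ∈ O x)
    (M : Set X) (hM : ∀ x ∈ M, ∀ y ∈ O x, g x ≤ g y) :
    ∃ A : Set X, WeaklySeparated A ∧ Cardinal.lift.{u} #(g '' M) ≤ #A := by
  have hS : ∀ s : g '' M, ∃ x, x ∈ M ∧ g x = s := by
    rintro ⟨s, x, hx, hgx⟩
    exact ⟨x, hx, hgx⟩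
  choose c hc1 hc2 using hS
  have hinj : Function.Injective c := fun s t hst => by
    apply Subtype.ext; rw [← hc2 s, ← hc2 t, hst]
  refine ⟨Set.range c, ⟨O, fun a _ => ⟨hOopen a, hOmem a⟩, ?_⟩, ?_⟩
  · rintro a ⟨s, rfl⟩ b ⟨t, rfl⟩ hab
    have hst : g (c s) ≠ g (c t) := by
      rw [hc2 s, hc2 t]
      intro h
      exact hab (by rw [Subtype.ext h])
    rcases (Ne.lt_or_gt hst) with h | h
    · left
      intro hmem
      exact absurd (hM (c t) (hc1 t) (c s) hmem) (not_le.mpr h)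
    · right
      intro hmem
      exact absurd (hM (c s) (hc1 s) (c t) hmem) (not_le.mpr h)
  · have := Cardinal.mk_range_eq_of_injective hinj
    rw [← this, Cardinal.lift_uzero]

theorem stmt_14 {X : Type u} [TopologicalSpace X] [ConnectedSpace X]
    (f : X → ℝ) (hcont : Continuous f)
    (hf : ∀ x : X, IsLocalMin f x ∨ IsLocalMax f x)
    (hnc : ¬ ∀ x y : X, f x = f y) :
    ∀ κ : Cardinal.{u}, κ < Cardinal.continuum →
      ∃ A : Set X, WeaklySeparated A ∧ κ < #A := by
  intro κ hκ
  -- extract open extremal neighborhoods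
  have hO : ∀ x : X, ∃ U : Set X, IsOpen U ∧ x ∈ U ∧
      ((∀ y ∈ U, f x ≤ f y) ∨ (∀ y ∈ U, f y ≤ f x)) := by
    intro x
    rcases hf x with h | h
    · rcases eventually_nhds_iff.mp h with ⟨U, hU, hUo, hxU⟩
      exact ⟨U, hUo, hxU, Or.inl hU⟩
    · rcases eventually_nhds_iff.mp h with ⟨U, hU, hUo, hxU⟩
      exact ⟨U, hUo, hxU, Or.inr hU⟩
  choose O hOopen hOmem hOext using hO
  set M : Set X := {x | ∀ y ∈ O x, f x ≤ f y} with hMdef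
  set N : Set X := {x | ∀ y ∈ O x, f y ≤ f x} with hNdef
  -- the range of f has cardinality at least continuum
  push_neg at hnc
  obtain ⟨x₀, y₀, hxy⟩ := hnc
  have hconn : (Set.range f).OrdConnected :=
    (isPreconnected_range hcont).ordConnected
  have hcard0 : Cardinal.continuum.{0} ≤ #(Set.range f) := by
    rcases (Ne.lt_or_gt hxy) with h | h
    · have hsub : Set.Icc (f x₀) (f y₀) ⊆ Set.range f :=
        hconn.out (Set.mem_range_self x₀) (Set.mem_range_self y₀)
      calc Cardinal.continuum = #(Set.Icc (f x₀) (f y₀)) := (Cardinal.mk_Icc_real h).symm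
        _ ≤ #(Set.range f) := Cardinal.mk_le_mk_of_subset hsub
    · have hsub : Set.Icc (f y₀) (f x₀) ⊆ Set.range f :=
        hconn.out (Set.mem_range_self y₀) (Set.mem_range_self x₀)
      calc Cardinal.continuum = #(Set.Icc (f y₀) (f x₀)) := (Cardinal.mk_Icc_real h).symm
        _ ≤ #(Set.range f) := Cardinal.mk_le_mk_of_subset hsub
  have hunion : Set.range f ⊆ f '' M ∪ f '' N := by
    rintro r ⟨x, rfl⟩
    rcases hOext x with h | h
    · exact Or.inl ⟨x, h, rfl⟩
    · exact Or.inr ⟨x, h, rfl⟩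
  have hcard : Cardinal.continuum.{u} ≤
      Cardinal.lift.{u} #(f '' M) + Cardinal.lift.{u} #(f '' N) := by
    have h1 : Cardinal.continuum.{0} ≤ #(f '' M) + #(f '' N) :=
      hcard0.trans ((Cardinal.mk_le_mk_of_subset hunion).trans (Cardinal.mk_union_le _ _))
    have := Cardinal.lift_le.mpr h1
    rwa [Cardinal.lift_continuum, Cardinal.lift_add] at this
  have hcase : κ < Cardinal.lift.{u} #(f '' M) ∨ κ < Cardinal.lift.{u} #(f '' N) := by
    by_contra h
    push_neg at h
    have hlt : Cardinal.lift.{u} #(f '' M) + Cardinal.lift.{u} #(f '' N) <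
        Cardinal.continuum.{u} :=
      lt_of_le_of_lt (add_le_add h.1 h.2)
        (Cardinal.add_lt_of_lt Cardinal.aleph0_le_continuum hκ hκ)
    exact absurd hcard (not_le.mpr hlt)
  rcases hcase with h | h
  · obtain ⟨A, hA, hle⟩ := aux_ws f O hOopen hOmem M (fun x hx => hx)
    exact ⟨A, hA, lt_of_lt_of_le h hle⟩
  · obtain ⟨A, hA, hle⟩ := aux_ws (-f) O hOopen hOmem N
      (fun x hx y hy => neg_le_neg (hx y hy))
    refine ⟨A, hA, lt_of_lt_of_le ?_ hle⟩
    have himg : (-f) '' N = (fun r : ℝ => -r) '' (f '' N) := by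
      rw [← Set.image_comp]; rfl
    have : #((-f) '' N) = #(f '' N) := by
      rw [himg, Cardinal.mk_image_eq neg_injective]
    rwa [this]
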